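/- Let m < n be positive integers. The polynomial g(x) = 1 - c x^m + x^n with c ∈ ℝ has a degenerate positive real root (a positive root that is also a root of g') if and only if c = n / (m^{m/n} (n-m)^{(n-m)/n}). -/

import Mathlib

theorem degenerate_root_iff_c_eq_r (m n : ℕ) (hm : 0 < m) (hmn : m < n) (c : ℝ) :
    (∃ ζ : ℝ, 0 < ζ ∧ (1 - c * ζ ^ m + ζ ^ n = 0) ∧
      deriv (fun x : ℝ => 1 - c * x ^ m + x ^ n) ζ = 0) ↔
    c = (n : ℝ) / ((m : ℝ) ^ ((m : ℝ) / (n : ℝ)) *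
      ((n : ℝ) - (m : ℝ)) ^ (((n : ℝ) - (m : ℝ)) / (n : ℝ))) := by
  set M : ℝ := (m : ℝ) with hMdef
  set N : ℝ := (n : ℝ) with hNdef
  have hM : (0:ℝ) < M := by rw [hMdef]; exact_mod_cast hm
  have hN : (0:ℝ) < N := by rw [hNdef]; exact_mod_cast (hm.trans hmn)
  have hMN : M < N := by rw [hMdef, hNdef]; exact_mod_cast hmn
  have hNM : (0:ℝ) < N - M := by linarith
  have hcastnm : ((n - m : ℕ) : ℝ) = N - M := by
    push_cast [Nat.cast_sub hmn.le]; ring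
  -- derivative formula for any point
  have hderiv : ∀ ζ : ℝ, deriv (fun x : ℝ => 1 - c * x ^ m + x ^ n) ζ
      = 0 - c * (↑m * ζ ^ (m - 1)) + ↑n * ζ ^ (n - 1) := by
    intro ζ
    have H : HasDerivAt (fun x : ℝ => 1 - c * x ^ m + x ^ n)
        (0 - c * (↑m * ζ ^ (m - 1)) + ↑n * ζ ^ (n - 1)) ζ :=
      ((hasDerivAt_const ζ (1:ℝ)).sub ((hasDerivAt_pow m ζ).const_mul c)).add
        (hasDerivAt_pow n ζ)
    exact H.deriv
  have haux : N / M * (M / (N - M)) ^ ((N - M) / N) =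
      N / (M ^ (M / N) * (N - M) ^ ((N - M) / N)) := by
    set s : ℝ := (N - M) / N with hs
    have hs1 : s - 1 = -(M / N) := by field_simp [hs]; rw [hs, sub_mul, div_mul_cancel₀ _ hN.ne']; ring
    have h1 : M ^ s / M = (M ^ (M / N))⁻¹ := by
      calc M ^ s / M = M ^ s / M ^ (1:ℝ) := by rw [Real.rpow_one]
        _ = M ^ (s - 1) := (Real.rpow_sub hM s 1).symm
        _ = M ^ (-(M / N)) := by rw [hs1]
        _ = (M ^ (M / N))⁻¹ := Real.rpow_neg hM.le _
    rw [Real.div_rpow hM.le hNM.le]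
    have hMs : (0:ℝ) < M ^ (M / N) := Real.rpow_pos_of_pos hM _
    have hNMs : (0:ℝ) < (N - M) ^ s := Real.rpow_pos_of_pos hNM _
    rw [show N / M * (M ^ s / (N - M) ^ s) = N * (M ^ s / M) / (N - M) ^ s by ring, h1]
    field_simp
  constructor
  · rintro ⟨ζ, hζ, hg, hg'⟩
    rw [hderiv ζ] at hg'
    have hzm : (0:ℝ) < ζ ^ (m - 1) := pow_pos hζ _
    have e0 : ζ ^ (n - 1) = ζ ^ (n - m) * ζ ^ (m - 1) := by
      rw [← pow_add]; congr 1; omega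
    have key : c * ↑m = ↑n * ζ ^ (n - m) := by
      have h2 : c * ↑m * ζ ^ (m - 1) = ↑n * ζ ^ (n - m) * ζ ^ (m - 1) := by
        rw [e0] at hg'; linear_combination -hg'
      exact mul_right_cancel₀ hzm.ne' h2
    have e1 : ζ ^ (n - m) * ζ ^ m = ζ ^ n := by
      rw [← pow_add]; congr 1; omega
    have hzn : ζ ^ n * (N - M) = M := by
      linear_combination (-M) * hg - ζ ^ m * key - N * e1
    have hznd : ζ ^ n = M / (N - M) := by
      field_simp; linarith [hzn]
    have hzeta : ζ = (M / (N - M)) ^ ((1:ℝ) / N) := by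
      have h3 : ζ ^ (N : ℝ) = M / (N - M) := by
        rw [hNdef, Real.rpow_natCast]; exact hznd
      rw [← h3, ← Real.rpow_mul hζ.le, mul_one_div, div_self hN.ne', Real.rpow_one]
    have hbpos : (0:ℝ) < M / (N - M) := div_pos hM hNM
    have hznm : ζ ^ (n - m) = (M / (N - M)) ^ ((N - M) / N) := by
      rw [hzeta, ← Real.rpow_natCast _ (n - m), ← Real.rpow_mul hbpos.le, hcastnm]
      congr 1; ring
    have hc : c = N / M * (M / (N - M)) ^ ((N - M) / N) := by
      rw [← hznm]
      field_simp
      linear_combination key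
    rw [hc, haux]
  · intro hc
    set s : ℝ := (N - M) / N with hsdef
    set ζ : ℝ := (M / (N - M)) ^ ((1:ℝ) / N) with hzdef
    have hbpos : (0:ℝ) < M / (N - M) := div_pos hM hNM
    have hζ : 0 < ζ := Real.rpow_pos_of_pos hbpos _
    have hzn : ζ ^ n = M / (N - M) := by
      rw [hzdef, ← Real.rpow_natCast _ n, ← Real.rpow_mul hbpos.le, ← hNdef]
      rw [one_div_mul_cancel hN.ne', Real.rpow_one]
    have hznm : ζ ^ (n - m) = M ^ s / (N - M) ^ s := by
      rw [hzdef, ← Real.rpow_natCast _ (n - m), ← Real.rpow_mul hbpos.le, hcastnm,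
        one_div_mul_eq_div, ← hsdef, Real.div_rpow hM.le hNM.le]
    have hzm : ζ ^ m = M ^ (M / N) / (N - M) ^ (M / N) := by
      rw [hzdef, ← Real.rpow_natCast _ m, ← Real.rpow_mul hbpos.le, ← hMdef,
        one_div_mul_eq_div, Real.div_rpow hM.le hNM.le]
    have hMs : (0:ℝ) < M ^ (M / N) := Real.rpow_pos_of_pos hM _
    have hNMs : (0:ℝ) < (N - M) ^ s := Real.rpow_pos_of_pos hNM _
    have hNMm : (0:ℝ) < (N - M) ^ (M / N) := Real.rpow_pos_of_pos hNM _
    have hMsum : M ^ s * M ^ (M / N) = M := by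
      rw [← Real.rpow_add hM, hsdef]
      rw [show (N - M) / N + M / N = 1 by field_simp; ring, Real.rpow_one]
    have hNMsum : (N - M) ^ s * (N - M) ^ (M / N) = N - M := by
      rw [← Real.rpow_add hNM, hsdef]
      rw [show (N - M) / N + M / N = 1 by field_simp; ring, Real.rpow_one]
    have hczm : c * ζ ^ m = N / (N - M) := by
      rw [hc, hzm, div_mul_div_comm,
        div_eq_div_iff (by positivity) hNM.ne']
      linear_combination (-(N * M ^ (M / N))) * hNMsum
    refine ⟨ζ, hζ, ?_, ?_⟩
    · rw [hczm, hzn]; field_simp; ring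
    · rw [hderiv ζ]
      have key : c * ↑m = ↑n * ζ ^ (n - m) := by
        rw [hc, hznm, ← hMdef, ← hNdef, div_mul_eq_mul_div, mul_div_assoc]
        congr 1
        rw [div_eq_div_iff (by positivity) (by positivity)]
        linear_combination (-((N - M) ^ s)) * hMsum
      have e0 : ζ ^ (n - 1) = ζ ^ (n - m) * ζ ^ (m - 1) := by
        rw [← pow_add]; congr 1; omega
      rw [e0]
      linear_combination (-(ζ ^ (m - 1))) * key
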